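/- arXiv:2212.12334 — 3 statements merged into one kernel-verified Lean document; each statement's English description precedes it below -/
import Mathlib

section
/- Let ρ be a probability measure on ℝ^{d1} × ℝ^{d2} with ∫∫ (‖x‖₂² + ‖y‖₂²) dρ ≤ K, and suppose E satisfies E(x,y) - Ē_low(y') ≤ C₂(1 + ‖x‖₂² + ‖y‖₂² + ‖y'‖₂²) for all x, y, y', where Ē_low is a lower-bounding function of E. Then for m := ∫ y dρ_Y (the mean of the y-marginal), exp(-α Ē_low(m)) / ∫ exp(-α E(x, m)) dρ_X(x) ≤ exp(α C₂ (1 + 2K)). -/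
open MeasureTheory

theorem stmt3 (d1 d2 : ℕ) (α C₂ K : ℝ) (hα : 0 < α) (hC₂ : 0 < C₂) (hK : 0 < K)
    (ρ : Measure (EuclideanSpace ℝ (Fin d1) × EuclideanSpace ℝ (Fin d2)))
    [IsProbabilityMeasure ρ]
    (E : EuclideanSpace ℝ (Fin d1) → EuclideanSpace ℝ (Fin d2) → ℝ)
    (Elow : EuclideanSpace ℝ (Fin d2) → ℝ)
    (hlow : ∀ x y, Elow y ≤ E x y)
    (hgrowth : ∀ x y y', E x y - Elow y' ≤ C₂ * (1 + ‖x‖ ^ 2 + ‖y‖ ^ 2 + ‖y'‖ ^ 2))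
    (hmom : ∫ p, (‖p.1‖ ^ 2 + ‖p.2‖ ^ 2) ∂ρ ≤ K)
    (hmomint : Integrable (fun p => ‖p.1‖ ^ 2 + ‖p.2‖ ^ 2) ρ)
    (m : EuclideanSpace ℝ (Fin d2))
    (hm : m = ∫ y, y ∂(ρ.map Prod.snd)) :
    Real.exp (-α * Elow m) / (∫ x, Real.exp (-α * E x m) ∂(ρ.map Prod.fst)) ≤
      Real.exp (α * C₂ * (1 + 2 * K)) := by
  set μ := ρ.map Prod.fst with hμ
  set ν := ρ.map Prod.snd with hν
  haveI : IsProbabilityMeasure μ := Measure.isProbabilityMeasure_map measurable_fst.aemeasurable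
  haveI : IsProbabilityMeasure ν := Measure.isProbabilityMeasure_map measurable_snd.aemeasurable
  -- Integrability of component moments
  have hInt1 : Integrable (fun p : EuclideanSpace ℝ (Fin d1) × EuclideanSpace ℝ (Fin d2) =>
      ‖p.1‖ ^ 2) ρ := by
    refine hmomint.mono ?_ ?_
    · exact ((measurable_fst.norm.pow measurable_const)).aestronglyMeasurable
    · filter_upwards with p
      simp only [Real.norm_eq_abs, abs_of_nonneg (by positivity : (0:ℝ) ≤ ‖p.1‖ ^ 2)]
      have : (0:ℝ) ≤ ‖p.2‖ ^ 2 := by positivity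
      rw [abs_of_nonneg (by positivity)]
      linarith
  have hInt2 : Integrable (fun p : EuclideanSpace ℝ (Fin d1) × EuclideanSpace ℝ (Fin d2) =>
      ‖p.2‖ ^ 2) ρ := by
    refine hmomint.mono ?_ ?_
    · exact ((measurable_snd.norm.pow measurable_const)).aestronglyMeasurable
    · filter_upwards with p
      simp only [Real.norm_eq_abs, abs_of_nonneg (by positivity : (0:ℝ) ≤ ‖p.2‖ ^ 2)]
      have : (0:ℝ) ≤ ‖p.1‖ ^ 2 := by positivity
      rw [abs_of_nonneg (by positivity)]
      linarith
  have hI1int : Integrable (fun x : EuclideanSpace ℝ (Fin d1) => ‖x‖ ^ 2) μ := by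
    rw [hμ, integrable_map_measure
      ((measurable_norm.pow measurable_const)).aestronglyMeasurable measurable_fst.aemeasurable]
    exact hInt1
  have hI2int : Integrable (fun y : EuclideanSpace ℝ (Fin d2) => ‖y‖ ^ 2) ν := by
    rw [hν, integrable_map_measure
      ((measurable_norm.pow measurable_const)).aestronglyMeasurable measurable_snd.aemeasurable]
    exact hInt2
  set I1 : ℝ := ∫ x, ‖x‖ ^ 2 ∂μ with hI1
  set I2 : ℝ := ∫ y, ‖y‖ ^ 2 ∂ν with hI2
  have hI1eq : I1 = ∫ p, ‖p.1‖ ^ 2 ∂ρ := by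
    rw [hI1, hμ, integral_map measurable_fst.aemeasurable
      ((measurable_norm.pow measurable_const)).aestronglyMeasurable]
  have hI2eq : I2 = ∫ p, ‖p.2‖ ^ 2 ∂ρ := by
    rw [hI2, hν, integral_map measurable_snd.aemeasurable
      ((measurable_norm.pow measurable_const)).aestronglyMeasurable]
  have hsum : I1 + I2 ≤ K := by
    rw [hI1eq, hI2eq, ← integral_add hInt1 hInt2]
    exact hmom
  have hI1nn : 0 ≤ I1 := integral_nonneg fun x => by positivity
  have hI2nn : 0 ≤ I2 := integral_nonneg fun y => by positivity
  -- bound on ‖m‖²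
  have hmsq : ‖m‖ ^ 2 ≤ I2 := by
    have hnormint : Integrable (fun y : EuclideanSpace ℝ (Fin d2) => ‖y‖) ν := by
      refine (hI2int.add (integrable_const 1)).mono
        measurable_norm.aestronglyMeasurable ?_
      filter_upwards with y
      have h1 : (0:ℝ) ≤ ‖y‖ := norm_nonneg y
      rw [Real.norm_eq_abs, abs_of_nonneg h1, Pi.add_apply, Real.norm_eq_abs,
        abs_of_nonneg (by positivity)]
      nlinarith
    have hjensen : (∫ y, ‖y‖ ∂ν) ^ 2 ≤ ∫ y, ‖y‖ ^ 2 ∂ν := by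
      have hconv : ConvexOn ℝ Set.univ (fun t : ℝ => t ^ 2) :=
        Even.convexOn_pow (even_two)
      have := hconv.map_integral_le (continuous_pow 2).continuousOn isClosed_univ
        (Filter.Eventually.of_forall fun y => Set.mem_univ _) hnormint ?_
      · exact this
      · exact hI2int
    have hmn : ‖m‖ ≤ ∫ y, ‖y‖ ∂ν := by
      rw [hm]
      exact norm_integral_le_integral_norm _
    calc ‖m‖ ^ 2 ≤ (∫ y, ‖y‖ ∂ν) ^ 2 := by
          apply pow_le_pow_left₀ (norm_nonneg m) hmn
      _ ≤ I2 := hjensen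
  -- main case split on the denominator
  set D : ℝ := ∫ x, Real.exp (-α * E x m) ∂μ with hD
  rcases le_or_gt D 0 with hDle | hDpos
  · calc Real.exp (-α * Elow m) / D ≤ 0 :=
          div_nonpos_iff.mpr (Or.inl ⟨(Real.exp_pos _).le, hDle⟩)
      _ ≤ Real.exp (α * C₂ * (1 + 2 * K)) := (Real.exp_pos _).le
  · have hfInt : Integrable (fun x => Real.exp (-α * E x m)) μ := by
      by_contra h
      rw [hD, integral_undef h] at hDpos
      exact lt_irrefl 0 hDpos
    set c : ℝ := α * C₂ with hc
    have hcpos : 0 < c := mul_pos hα hC₂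
    set h : EuclideanSpace ℝ (Fin d1) → ℝ :=
      fun x => -c * (1 + ‖x‖ ^ 2 + 2 * ‖m‖ ^ 2) with hh
    have hhint : Integrable h μ := by
      have : h = fun x => (-c) * ‖x‖ ^ 2 + (-c * (1 + 2 * ‖m‖ ^ 2)) := by
        funext x; rw [hh]; ring
      rw [this]
      exact (hI1int.const_mul _).add (integrable_const _)
    have hhnonpos : ∀ x, h x ≤ 0 := fun x => by
      simp only [hh]
      nlinarith [mul_nonneg hcpos.le (sq_nonneg ‖x‖), mul_nonneg hcpos.le (sq_nonneg ‖m‖),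
        hcpos.le]
    have hehint : Integrable (fun x => Real.exp (h x)) μ := by
      refine (integrable_const (1:ℝ)).mono ?_ ?_
      · exact (Real.continuous_exp.comp (by
          have : Continuous h := by
            rw [hh]
            exact (continuous_const.mul
              ((continuous_const.add (continuous_norm.pow 2)).add continuous_const))
          exact this)).aestronglyMeasurable
      · filter_upwards with x
        rw [Real.norm_eq_abs, abs_of_nonneg (Real.exp_pos _).le]
        simp only [norm_one]
        exact Real.exp_le_one_iff.mpr (hhnonpos x)
    -- pointwise bound g ≤ f
    have hgle : ∀ x, Real.exp (-α * Elow m) * Real.exp (h x) ≤ Real.exp (-α * E x m) := by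
      intro x
      rw [← Real.exp_add, Real.exp_le_exp]
      have h2 := hgrowth x m m
      simp only [hh, hc]
      nlinarith [mul_le_mul_of_nonneg_left h2 hα.le]
    have hgint : Integrable (fun x => Real.exp (-α * Elow m) * Real.exp (h x)) μ :=
      hehint.const_mul _
    have hDlb : Real.exp (-α * Elow m) * Real.exp (-c * (1 + 2 * K)) ≤ D := by
      have hjensen : Real.exp (∫ x, h x ∂μ) ≤ ∫ x, Real.exp (h x) ∂μ := by
        exact convexOn_exp.map_integral_le Real.continuous_exp.continuousOn isClosed_univ
          (Filter.Eventually.of_forall fun x => Set.mem_univ _) hhint hehint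
      have hinth : ∫ x, h x ∂μ = -c * (1 + I1 + 2 * ‖m‖ ^ 2) := by
        have : h = fun x => (-c) * ‖x‖ ^ 2 + (-c * (1 + 2 * ‖m‖ ^ 2)) := by
          funext x; rw [hh]; ring
        rw [this, integral_add (hI1int.const_mul _) (integrable_const _),
          integral_const_mul, integral_const]
        simp [← hI1]
        ring
      have hexp_le : -c * (1 + 2 * K) ≤ ∫ x, h x ∂μ := by
        rw [hinth]
        have : I1 + 2 * ‖m‖ ^ 2 ≤ 2 * K := by nlinarith
        nlinarith
      calc Real.exp (-α * Elow m) * Real.exp (-c * (1 + 2 * K))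
          ≤ Real.exp (-α * Elow m) * Real.exp (∫ x, h x ∂μ) := by
            apply mul_le_mul_of_nonneg_left (Real.exp_le_exp.mpr hexp_le) (Real.exp_pos _).le
        _ ≤ Real.exp (-α * Elow m) * ∫ x, Real.exp (h x) ∂μ := by
            apply mul_le_mul_of_nonneg_left hjensen (Real.exp_pos _).le
        _ = ∫ x, Real.exp (-α * Elow m) * Real.exp (h x) ∂μ := (integral_const_mul _ _).symm
        _ ≤ D := integral_mono hgint hfInt hgle
    rw [div_le_iff₀ hDpos]
    calc Real.exp (-α * Elow m)
        = Real.exp (α * C₂ * (1 + 2 * K)) *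
            (Real.exp (-α * Elow m) * Real.exp (-c * (1 + 2 * K))) := by
          rw [← Real.exp_add, ← Real.exp_add, hc]; ring_nf
      _ ≤ Real.exp (α * C₂ * (1 + 2 * K)) * D := by
          apply mul_le_mul_of_nonneg_left hDlb (Real.exp_pos _).le
end

section
/- Let X̄ be a square-integrable random variable in ℝ^{d1} with law ρ_X, let ȳ ∈ ℝ^{d2} be fixed, and define the consensus point x_α = E[X̄ exp(-α E(X̄, ȳ))] / E[exp(-α E(X̄, ȳ))]. Suppose Ē_low(ȳ) ≤ E(x, ȳ) for all x, for a function Ē_low. Then E‖X̄ - x_α‖₂² ≤ 4 Var(X̄) / M, where Var(X̄) = E‖X̄ - EX̄‖₂² and M := E[exp(-α E(X̄, ȳ))] · e^{α Ē_low(ȳ)} ∈ (0,1]. -/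
open MeasureTheory

theorem stmt7 (d1 d2 : ℕ) {Ω : Type*} [MeasurableSpace Ω] (P : Measure Ω)
    [IsProbabilityMeasure P] (α : ℝ) (hα : 0 < α)
    (E : EuclideanSpace ℝ (Fin d1) → EuclideanSpace ℝ (Fin d2) → ℝ)
    (Elow : EuclideanSpace ℝ (Fin d2) → ℝ)
    (X : Ω → EuclideanSpace ℝ (Fin d1)) (ybar : EuclideanSpace ℝ (Fin d2))
    (hX : Measurable X) (hX2 : MemLp X 2 P)
    (hlow : ∀ x, Elow ybar ≤ E x ybar)
    (hwint : Integrable (fun ω => Real.exp (-α * E (X ω) ybar)) P)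
    (hwXint : Integrable (fun ω => Real.exp (-α * E (X ω) ybar) • X ω) P)
    (hint2 : Integrable
      (fun ω => Real.exp (-α * E (X ω) ybar) * ‖X ω - (∫ ω', X ω' ∂P)‖ ^ 2) P)
    (xα : EuclideanSpace ℝ (Fin d1))
    (hxα : xα = (∫ ω, Real.exp (-α * E (X ω) ybar) ∂P)⁻¹ •
      ∫ ω, Real.exp (-α * E (X ω) ybar) • X ω ∂P)
    (M : ℝ)
    (hM : M = (∫ ω, Real.exp (-α * E (X ω) ybar) ∂P) * Real.exp (α * Elow ybar)) :
    0 < M ∧ M ≤ 1 ∧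
      (∫ ω, ‖X ω - xα‖ ^ 2 ∂P) ≤ 4 * (∫ ω, ‖X ω - (∫ ω', X ω' ∂P)‖ ^ 2 ∂P) / M := by
  set w : Ω → ℝ := fun ω => Real.exp (-α * E (X ω) ybar) with hw
  set m : EuclideanSpace ℝ (Fin d1) := ∫ ω', X ω' ∂P with hm
  set Z : ℝ := ∫ ω, w ω ∂P with hZ
  have hwpos : ∀ ω, 0 < w ω := fun ω => Real.exp_pos _
  have hZpos : 0 < Z := integral_exp_pos hwint
  have hwle : ∀ ω, w ω ≤ Real.exp (-α * Elow ybar) := fun ω =>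
    Real.exp_le_exp.2 (by nlinarith [hlow (X ω)])
  have hZle : Z ≤ Real.exp (-α * Elow ybar) := by
    calc Z ≤ ∫ _ω, Real.exp (-α * Elow ybar) ∂P :=
        integral_mono hwint (integrable_const _) hwle
      _ = Real.exp (-α * Elow ybar) := by simp
  have hMpos : 0 < M := by rw [hM]; positivity
  have hMle : M ≤ 1 := by
    rw [hM]
    calc Z * Real.exp (α * Elow ybar)
        ≤ Real.exp (-α * Elow ybar) * Real.exp (α * Elow ybar) :=
          mul_le_mul_of_nonneg_right hZle (Real.exp_pos _).le
      _ = 1 := by rw [← Real.exp_add]; ring_nf; exact Real.exp_zero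
  refine ⟨hMpos, hMle, ?_⟩
  -- integrabilities
  have hXm : MemLp (fun ω => X ω - m) 2 P := hX2.sub (memLp_const m)
  have hVint : Integrable (fun ω => ‖X ω - m‖ ^ 2) P :=
    (memLp_two_iff_integrable_sq_norm hXm.aestronglyMeasurable).1 hXm
  set V : ℝ := ∫ ω, ‖X ω - m‖ ^ 2 ∂P with hV
  have hVnn : 0 ≤ V := integral_nonneg fun ω => by positivity
  have hg1int : Integrable (fun ω => w ω • (X ω - m)) P := by
    have h := hwXint.sub (hwint.smul_const m)
    refine h.congr (Filter.Eventually.of_forall fun ω => ?_)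
    simp only [Pi.sub_apply]
    exact (smul_sub _ _ _).symm
  have hwnint : Integrable (fun ω => w ω * ‖X ω - m‖) P := by
    refine hg1int.norm.congr (Filter.Eventually.of_forall fun ω => ?_)
    simp [norm_smul, abs_of_pos (hwpos ω)]
  set I1 : ℝ := ∫ ω, w ω * ‖X ω - m‖ ∂P with hI1
  set I2 : ℝ := ∫ ω, w ω * ‖X ω - m‖ ^ 2 ∂P with hI2
  have hI1nn : 0 ≤ I1 := integral_nonneg fun ω => by positivity
  have hI2nn : 0 ≤ I2 := integral_nonneg fun ω => by positivity
  have hI2le : I2 ≤ Real.exp (-α * Elow ybar) * V := by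
    calc I2 ≤ ∫ ω, Real.exp (-α * Elow ybar) * ‖X ω - m‖ ^ 2 ∂P := by
          refine integral_mono hint2 (hVint.const_mul _) fun ω => ?_
          exact mul_le_mul_of_nonneg_right (hwle ω) (by positivity)
      _ = Real.exp (-α * Elow ybar) * V := by rw [hV, integral_const_mul]
  -- Cauchy–Schwarz: I1^2 ≤ Z * I2
  have hCS : I1 ^ 2 ≤ Z * I2 := by
    have hsqm : AEStronglyMeasurable (fun ω => Real.sqrt (w ω)) P :=
      Real.continuous_sqrt.comp_aestronglyMeasurable hwint.aestronglyMeasurable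
    have hnm : AEStronglyMeasurable (fun ω => ‖X ω - m‖) P :=
      hXm.aestronglyMeasurable.norm
    have hnm2 : AEStronglyMeasurable (fun ω => Real.sqrt (w ω) * ‖X ω - m‖) P :=
      hsqm.mul hnm
    have hf : MemLp (fun ω => Real.sqrt (w ω)) (ENNReal.ofReal 2) P := by
      rw [show ENNReal.ofReal 2 = 2 by norm_num]
      refine (memLp_two_iff_integrable_sq hsqm).2 ?_
      refine hwint.congr (Filter.Eventually.of_forall fun ω => ?_)
      show w ω = Real.sqrt (w ω) ^ 2
      rw [Real.sq_sqrt (hwpos ω).le]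
    have hg : MemLp (fun ω => Real.sqrt (w ω) * ‖X ω - m‖) (ENNReal.ofReal 2) P := by
      rw [show ENNReal.ofReal 2 = 2 by norm_num]
      refine (memLp_two_iff_integrable_sq hnm2).2 ?_
      refine hint2.congr (Filter.Eventually.of_forall fun ω => ?_)
      show Real.exp (-α * E (X ω) ybar) * ‖X ω - m‖ ^ 2
        = (Real.sqrt (w ω) * ‖X ω - m‖) ^ 2
      rw [mul_pow, Real.sq_sqrt (hwpos ω).le]
    have hconj : Real.HolderConjugate 2 2 := Real.HolderConjugate.two_two
    have key := integral_mul_le_Lp_mul_Lq_of_nonneg hconj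
      (Filter.Eventually.of_forall fun ω => Real.sqrt_nonneg (w ω))
      (Filter.Eventually.of_forall fun ω =>
        mul_nonneg (Real.sqrt_nonneg _) (norm_nonneg _)) hf hg
    have e1 : ∫ ω, Real.sqrt (w ω) * (Real.sqrt (w ω) * ‖X ω - m‖) ∂P = I1 := by
      refine integral_congr_ae (Filter.Eventually.of_forall fun ω => ?_)
      show Real.sqrt (w ω) * (Real.sqrt (w ω) * ‖X ω - m‖) = w ω * ‖X ω - m‖
      rw [← mul_assoc, Real.mul_self_sqrt (hwpos ω).le]
    have e2 : ∫ ω, Real.sqrt (w ω) ^ (2:ℝ) ∂P = Z := by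
      refine integral_congr_ae (Filter.Eventually.of_forall fun ω => ?_)
      show Real.sqrt (w ω) ^ (2:ℝ) = w ω
      rw [Real.rpow_two, Real.sq_sqrt (hwpos ω).le]
    have e3 : ∫ ω, (Real.sqrt (w ω) * ‖X ω - m‖) ^ (2:ℝ) ∂P = I2 := by
      refine integral_congr_ae (Filter.Eventually.of_forall fun ω => ?_)
      show (Real.sqrt (w ω) * ‖X ω - m‖) ^ (2:ℝ) = w ω * ‖X ω - m‖ ^ 2
      rw [Real.rpow_two, mul_pow, Real.sq_sqrt (hwpos ω).le]
    rw [e1, e2, e3] at key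
    have h2 : I1 ^ 2 ≤ (Z ^ (1/(2:ℝ)) * I2 ^ (1/(2:ℝ))) ^ 2 :=
      pow_le_pow_left₀ hI1nn key 2
    calc I1 ^ 2 ≤ (Z ^ (1/(2:ℝ)) * I2 ^ (1/(2:ℝ))) ^ 2 := h2
      _ = Z * I2 := by
        rw [mul_pow, ← Real.rpow_two, ← Real.rpow_two,
          ← Real.rpow_mul hZpos.le, ← Real.rpow_mul hI2nn]
        norm_num
  -- bound on ‖xα - m‖
  have hsub : ∫ ω, w ω • (X ω - m) ∂P
      = (∫ ω, Real.exp (-α * E (X ω) ybar) • X ω ∂P) - Z • m := by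
    calc ∫ ω, w ω • (X ω - m) ∂P
        = ∫ ω, (Real.exp (-α * E (X ω) ybar) • X ω - w ω • m) ∂P := by
          refine integral_congr_ae (Filter.Eventually.of_forall fun ω => ?_)
          show w ω • (X ω - m) = w ω • X ω - w ω • m
          exact smul_sub _ _ _
      _ = (∫ ω, Real.exp (-α * E (X ω) ybar) • X ω ∂P) - ∫ ω, w ω • m ∂P :=
          integral_sub hwXint (hwint.smul_const m)
      _ = (∫ ω, Real.exp (-α * E (X ω) ybar) • X ω ∂P) - Z • m := by
          rw [integral_smul_const]
  have hxm : xα - m = Z⁻¹ • ∫ ω, w ω • (X ω - m) ∂P := by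
    rw [hsub, smul_sub, smul_smul, inv_mul_cancel₀ hZpos.ne', one_smul, hxα]
  have hBle : ‖xα - m‖ ≤ Z⁻¹ * I1 := by
    rw [hxm, norm_smul, norm_inv, Real.norm_of_nonneg hZpos.le]
    refine mul_le_mul_of_nonneg_left ?_ (by positivity)
    calc ‖∫ ω, w ω • (X ω - m) ∂P‖ ≤ ∫ ω, ‖w ω • (X ω - m)‖ ∂P :=
        norm_integral_le_integral_norm _
      _ = I1 := by
        refine integral_congr_ae (Filter.Eventually.of_forall fun ω => ?_)
        show ‖w ω • (X ω - m)‖ = w ω * ‖X ω - m‖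
        rw [norm_smul, Real.norm_of_nonneg (hwpos ω).le]
  have hexp : Real.exp (-α * Elow ybar) = (Real.exp (α * Elow ybar))⁻¹ := by
    rw [← Real.exp_neg]; ring_nf
  have hB2 : ‖xα - m‖ ^ 2 ≤ V / M := by
    have h1 : ‖xα - m‖ ^ 2 ≤ (Z⁻¹ * I1) ^ 2 :=
      pow_le_pow_left₀ (norm_nonneg _) hBle 2
    have h2 : (Z⁻¹ * I1) ^ 2 = Z⁻¹ ^ 2 * I1 ^ 2 := by ring
    have h3 : Z⁻¹ ^ 2 * I1 ^ 2 ≤ Z⁻¹ ^ 2 * (Z * I2) :=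
      mul_le_mul_of_nonneg_left hCS (by positivity)
    have h4 : Z⁻¹ ^ 2 * (Z * I2) = Z⁻¹ * I2 := by
      field_simp
    have h5 : Z⁻¹ * I2 ≤ Z⁻¹ * (Real.exp (-α * Elow ybar) * V) :=
      mul_le_mul_of_nonneg_left hI2le (by positivity)
    have h6 : Z⁻¹ * (Real.exp (-α * Elow ybar) * V) = V / M := by
      rw [hM, hexp]
      field_simp
    linarith
  -- final assembly
  have hXxα : MemLp (fun ω => X ω - xα) 2 P := hX2.sub (memLp_const xα)
  have hLint : Integrable (fun ω => ‖X ω - xα‖ ^ 2) P :=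
    (memLp_two_iff_integrable_sq_norm hXxα.aestronglyMeasurable).1 hXxα
  have hsplit : (∫ ω, ‖X ω - xα‖ ^ 2 ∂P) ≤ 2 * V + 2 * ‖xα - m‖ ^ 2 := by
    have hpt : ∀ ω, ‖X ω - xα‖ ^ 2 ≤ 2 * ‖X ω - m‖ ^ 2 + 2 * ‖xα - m‖ ^ 2 := by
      intro ω
      have h1 : ‖X ω - xα‖ ≤ ‖X ω - m‖ + ‖xα - m‖ := by
        have h := norm_sub_le (X ω - m) (xα - m)
        rw [sub_sub_sub_cancel_right] at h
        calc ‖X ω - xα‖ = ‖X ω - xα‖ := rfl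
          _ ≤ ‖X ω - m‖ + ‖xα - m‖ := by
            have := norm_add_le (X ω - m) (m - xα)
            rw [sub_add_sub_cancel] at this
            simpa [norm_sub_rev] using this
      nlinarith [norm_nonneg (X ω - xα), norm_nonneg (X ω - m), norm_nonneg (xα - m),
        sq_nonneg (‖X ω - m‖ - ‖xα - m‖)]
    calc (∫ ω, ‖X ω - xα‖ ^ 2 ∂P)
        ≤ ∫ ω, (2 * ‖X ω - m‖ ^ 2 + 2 * ‖xα - m‖ ^ 2) ∂P :=
          integral_mono hLint ((hVint.const_mul 2).add (integrable_const _)) hpt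
      _ = 2 * V + 2 * ‖xα - m‖ ^ 2 := by
          rw [integral_add (hVint.const_mul 2) (integrable_const _),
            integral_const_mul, integral_const]
          simp [hV]
  have hVdiv : V ≤ V / M := by
    rw [le_div_iff₀ hMpos]
    have h := mul_le_mul_of_nonneg_left hMle hVnn
    simpa using h
  calc (∫ ω, ‖X ω - xα‖ ^ 2 ∂P) ≤ 2 * V + 2 * ‖xα - m‖ ^ 2 := hsplit
    _ ≤ 2 * V + 2 * (V / M) := by linarith
    _ ≤ 2 * (V / M) + 2 * (V / M) := by linarith
    _ = 4 * V / M := by ring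
end

section
/- Under the same setup, the deterministic distance of the mean to the consensus point satisfies ‖E X̄ - x_α‖₂² ≤ Var(X̄) / M, with M as above. -/
open MeasureTheory

theorem stmt8 (d1 d2 : ℕ) {Ω : Type*} [MeasurableSpace Ω] (P : Measure Ω)
    [IsProbabilityMeasure P] (α : ℝ) (hα : 0 < α)
    (E : EuclideanSpace ℝ (Fin d1) → EuclideanSpace ℝ (Fin d2) → ℝ)
    (Elow : EuclideanSpace ℝ (Fin d2) → ℝ)
    (X : Ω → EuclideanSpace ℝ (Fin d1)) (ybar : EuclideanSpace ℝ (Fin d2))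
    (hX : Measurable X) (hX2 : MemLp X 2 P)
    (hlow : ∀ x, Elow ybar ≤ E x ybar)
    (hwint : Integrable (fun ω => Real.exp (-α * E (X ω) ybar)) P)
    (hwXint : Integrable (fun ω => Real.exp (-α * E (X ω) ybar) • X ω) P)
    (hint2 : Integrable
      (fun ω => Real.exp (-α * E (X ω) ybar) * ‖X ω - (∫ ω', X ω' ∂P)‖ ^ 2) P)
    (xα : EuclideanSpace ℝ (Fin d1))
    (hxα : xα = (∫ ω, Real.exp (-α * E (X ω) ybar) ∂P)⁻¹ •
      ∫ ω, Real.exp (-α * E (X ω) ybar) • X ω ∂P)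
    (M : ℝ)
    (hM : M = (∫ ω, Real.exp (-α * E (X ω) ybar) ∂P) * Real.exp (α * Elow ybar)) :
    ‖(∫ ω, X ω ∂P) - xα‖ ^ 2 ≤ (∫ ω, ‖X ω - (∫ ω', X ω' ∂P)‖ ^ 2 ∂P) / M := by
  set μ : EuclideanSpace ℝ (Fin d1) := ∫ ω, X ω ∂P with hμ
  set w : Ω → ℝ := fun ω => Real.exp (-α * E (X ω) ybar) with hw
  have hwpos : ∀ ω, 0 < w ω := fun ω => Real.exp_pos _
  have hwnn : ∀ ω, 0 ≤ w ω := fun ω => (hwpos ω).le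
  set Ew : ℝ := ∫ ω, w ω ∂P with hEw
  have hEwpos : 0 < Ew := by
    rw [hEw]
    rw [integral_pos_iff_support_of_nonneg (fun ω => hwnn ω) hwint]
    have : (Function.support fun ω => w ω) = Set.univ := by
      ext ω; simp [Function.mem_support, (hwpos ω).ne']
    rw [this]
    simp
  set V : ℝ := ∫ ω, ‖X ω - μ‖ ^ 2 ∂P with hV
  set I2 : ℝ := ∫ ω, w ω * ‖X ω - μ‖ ^ 2 ∂P with hI2
  have hI2nn : 0 ≤ I2 := integral_nonneg fun ω => by positivity
  -- integrability of w • (μ - X)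
  have hint1 : Integrable (fun ω => w ω • (μ - X ω)) P := by
    have : (fun ω => w ω • (μ - X ω)) = fun ω => w ω • μ - w ω • X ω := by
      ext ω; rw [smul_sub]
    rw [this]
    exact (hwint.smul_const μ).sub hwXint
  -- step A : μ - xα = Ew⁻¹ • ∫ w • (μ - X)
  have hA : μ - xα = Ew⁻¹ • ∫ ω, w ω • (μ - X ω) ∂P := by
    have h1 : ∫ ω, w ω • (μ - X ω) ∂P = Ew • μ - ∫ ω, w ω • X ω ∂P := by
      have : (fun ω => w ω • (μ - X ω)) = fun ω => w ω • μ - w ω • X ω := by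
        ext ω; rw [smul_sub]
      rw [this, integral_sub (hwint.smul_const μ) hwXint, integral_smul_const]
    rw [h1, smul_sub, smul_smul, inv_mul_cancel₀ hEwpos.ne', one_smul, hxα]
  -- step B : norm bound
  have hB : ‖μ - xα‖ ≤ Ew⁻¹ * ∫ ω, w ω * ‖X ω - μ‖ ∂P := by
    rw [hA, norm_smul, Real.norm_eq_abs, abs_of_pos (inv_pos.2 hEwpos)]
    gcongr
    calc ‖∫ ω, w ω • (μ - X ω) ∂P‖ ≤ ∫ ω, ‖w ω • (μ - X ω)‖ ∂P :=
          norm_integral_le_integral_norm _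
      _ = ∫ ω, w ω * ‖X ω - μ‖ ∂P := by
          congr 1; ext ω
          rw [norm_smul, Real.norm_eq_abs, abs_of_nonneg (hwnn ω), norm_sub_rev]
  -- Cauchy-Schwarz : ∫ w ‖X-μ‖ ≤ √Ew * √I2
  have hf : MemLp (fun ω => Real.sqrt (w ω)) (ENNReal.ofReal 2) P := by
    have h2 : (ENNReal.ofReal 2) = 2 := by norm_num
    rw [h2, memLp_two_iff_integrable_sq]
    · refine hwint.congr ?_
      filter_upwards with ω
      rw [Real.sq_sqrt (hwnn ω)]
    · exact (Real.continuous_sqrt.comp_aestronglyMeasurable hwint.1)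
  have hnormX : AEStronglyMeasurable (fun ω => ‖X ω - μ‖) P :=
    ((hX.sub measurable_const).norm.aestronglyMeasurable)
  have hg : MemLp (fun ω => Real.sqrt (w ω) * ‖X ω - μ‖) (ENNReal.ofReal 2) P := by
    have h2 : (ENNReal.ofReal 2) = 2 := by norm_num
    rw [h2, memLp_two_iff_integrable_sq]
    · refine hint2.congr ?_
      filter_upwards with ω
      rw [mul_pow, Real.sq_sqrt (hwnn ω)]
    · exact (Real.continuous_sqrt.comp_aestronglyMeasurable hwint.1).mul hnormX
  have hCS : ∫ ω, w ω * ‖X ω - μ‖ ∂P ≤ Real.sqrt Ew * Real.sqrt I2 := by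
    have := integral_mul_le_Lp_mul_Lq_of_nonneg Real.HolderConjugate.two_two (μ := P)
      (f := fun ω => Real.sqrt (w ω)) (g := fun ω => Real.sqrt (w ω) * ‖X ω - μ‖)
      (Filter.Eventually.of_forall fun ω => Real.sqrt_nonneg _)
      (Filter.Eventually.of_forall fun ω => mul_nonneg (Real.sqrt_nonneg _) (norm_nonneg _))
      hf hg
    have hfg : ∀ ω, Real.sqrt (w ω) * (Real.sqrt (w ω) * ‖X ω - μ‖) = w ω * ‖X ω - μ‖ := by
      intro ω
      rw [← mul_assoc, Real.mul_self_sqrt (hwnn ω)]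
    have hfp : ∀ ω, Real.sqrt (w ω) ^ (2 : ℝ) = w ω := by
      intro ω
      rw [Real.rpow_two, Real.sq_sqrt (hwnn ω)]
    have hgp : ∀ ω, (Real.sqrt (w ω) * ‖X ω - μ‖) ^ (2 : ℝ) = w ω * ‖X ω - μ‖ ^ 2 := by
      intro ω
      rw [Real.rpow_two, mul_pow, Real.sq_sqrt (hwnn ω)]
    simp only [hfg, hfp, hgp] at this
    calc ∫ ω, w ω * ‖X ω - μ‖ ∂P ≤ Ew ^ (1 / (2:ℝ)) * I2 ^ (1 / (2:ℝ)) := this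
      _ = Real.sqrt Ew * Real.sqrt I2 := by rw [Real.sqrt_eq_rpow, Real.sqrt_eq_rpow]
  -- combine B and CS, square
  have hsq : ‖μ - xα‖ ^ 2 ≤ Ew⁻¹ * I2 := by
    have h1 : ‖μ - xα‖ ≤ Ew⁻¹ * (Real.sqrt Ew * Real.sqrt I2) := by
      refine hB.trans ?_
      gcongr
    calc ‖μ - xα‖ ^ 2 ≤ (Ew⁻¹ * (Real.sqrt Ew * Real.sqrt I2)) ^ 2 := by
          have := norm_nonneg (μ - xα)
          gcongr
      _ = Ew⁻¹ ^ 2 * (Real.sqrt Ew ^ 2 * Real.sqrt I2 ^ 2) := by ring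
      _ = Ew⁻¹ ^ 2 * (Ew * I2) := by rw [Real.sq_sqrt hEwpos.le, Real.sq_sqrt hI2nn]
      _ = Ew⁻¹ * I2 := by field_simp
  -- bound I2 by exp(-α Elow) * V
  have hVint : Integrable (fun ω => ‖X ω - μ‖ ^ 2) P := by
    have hmem : MemLp (fun ω => X ω - μ) 2 P := hX2.sub (memLp_const μ)
    have := (memLp_two_iff_integrable_sq hnormX).1 hmem.norm
    exact this
  have hI2V : I2 ≤ Real.exp (-α * Elow ybar) * V := by
    rw [hI2, hV, ← integral_const_mul]
    refine integral_mono hint2 (hVint.const_mul _) fun ω => ?_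
    have hwle : w ω ≤ Real.exp (-α * Elow ybar) := by
      apply Real.exp_le_exp.2
      have := hlow (X ω)
      nlinarith
    have : (0:ℝ) ≤ ‖X ω - μ‖ ^ 2 := by positivity
    exact mul_le_mul_of_nonneg_right hwle this
  have hVnn : 0 ≤ V := integral_nonneg fun ω => by positivity
  have hMpos : 0 < M := by rw [hM]; positivity
  calc ‖μ - xα‖ ^ 2 ≤ Ew⁻¹ * I2 := hsq
    _ ≤ Ew⁻¹ * (Real.exp (-α * Elow ybar) * V) := by
        gcongr
    _ = V / M := by
        rw [hM]
        rw [eq_div_iff (by positivity)]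
        rw [neg_mul, Real.exp_neg]
        field_simp
end
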